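/- arXiv:2101.00329 — 2 statements merged into one kernel-verified Lean document; each statement's English description precedes it below -/
import Mathlib

section
/- Let C be a smooth projective geometrically irreducible curve of genus g(C) ≥ 1 over a finite field k of order q ≡ 1 (mod ℓ). There is a unique automorphism A of ℚ_ℓ ⊗_{ℤ_ℓ} T_ℓ(C) such that Φ_{k,C} = 1 + ℓA, and multiplication by A^{-1} defines a homomorphism dℒ: Pic⁰(C)[ℓ] = (T_ℓ(C) ∩ A·T_ℓ(C))/ℓA·T_ℓ(C) → T_ℓ(C)/(ℓT_ℓ(C) + ℓA·T_ℓ(C)) = Pic⁰(C)/ℓ·Pic⁰(C) (the Legendre derivative of Frobenius). -/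
/-!
# Statement 13 (Proposition `Aut`): the Legendre derivative of Frobenius

`T` is the ℓ-adic Tate module `T_ℓ(C)` of the smooth projective geometrically
irreducible curve `C` of genus `g ≥ 1` over the finite field `k` of order
`q ≡ 1 (mod ℓ)`: a free `ℤ_ℓ`-module of rank `2g`.  `Φ` is the automorphism `Φ_{k,C}`
induced by conjugation by a lift of the arithmetic Frobenius; by the Artin map,
`T/(1-Φ)T ≅ Pic⁰(C)[ℓ^∞]` is finite (hypothesis `hfin`).  The proposition: there is a
unique automorphism `A` of `V = ℚ_ℓ ⊗_{ℤ_ℓ} T` with `Φ = 1 + ℓA` on `V`, and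
multiplication by `A⁻¹` defines a homomorphism
`dℒ : (T ∩ A·T)/ℓA·T → T/(ℓT + ℓA·T)`,
i.e. from `Pic⁰(C)[ℓ]` to `Pic⁰(C)/ℓ·Pic⁰(C)` under the Artin identifications.
Here `T` is regarded inside `V` via `ι : t ↦ 1 ⊗ t`.
-/

open scoped TensorProduct

set_option maxHeartbeats 2000000 in
theorem stmt_13
    (ℓ : ℕ) [hℓ : Fact (Nat.Prime ℓ)] (q : ℕ) (hqmod : q % ℓ = 1) (hq1 : 1 < q)
    (g : ℕ) (hg : 1 ≤ g)
    -- the ℓ-adic Tate module, free of rank 2g over ℤ_ℓ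
    (T : Type) [AddCommGroup T] [Module ℤ_[ℓ] T]
    [Module.Free ℤ_[ℓ] T] [Module.Finite ℤ_[ℓ] T]
    (hrank : Module.finrank ℤ_[ℓ] T = 2 * g)
    -- the arithmetic Frobenius automorphism Φ_{k,C} of T
    (Φ : T ≃ₗ[ℤ_[ℓ]] T)
    -- T/(1-Φ)T ≅ Pic⁰(C)[ℓ^∞] is finite (via the Artin map)
    (hfin : Finite
      (T ⧸ LinearMap.range ((LinearMap.id : T →ₗ[ℤ_[ℓ]] T) - Φ.toLinearMap))) :
    ∃! A : (ℚ_[ℓ] ⊗[ℤ_[ℓ]] T) →ₗ[ℚ_[ℓ]] (ℚ_[ℓ] ⊗[ℤ_[ℓ]] T),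
      -- A is an automorphism of ℚ_ℓ ⊗ T with Φ = 1 + ℓ A
      Function.Bijective A
        ∧
      LinearMap.baseChange ℚ_[ℓ] Φ.toLinearMap = LinearMap.id + (ℓ : ℚ_[ℓ]) • A
        ∧
      -- multiplication by A⁻¹ defines dℒ : (T ∩ A T)/ℓA T → T/(ℓT + ℓA T)
      (∀ ι : T →ₗ[ℤ_[ℓ]] (ℚ_[ℓ] ⊗[ℤ_[ℓ]] T),
        (∀ t : T, ι t = (1 : ℚ_[ℓ]) ⊗ₜ[ℤ_[ℓ]] t) →
        -- the subgroups T, A·T, ℓA·T and ℓT + ℓA·T of ℚ_ℓ ⊗ T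
        ∀ TT AT lAT S3 : AddSubgroup (ℚ_[ℓ] ⊗[ℤ_[ℓ]] T),
          TT = AddMonoidHom.range ι.toAddMonoidHom →
          AT = AddMonoidHom.range (A.toAddMonoidHom.comp ι.toAddMonoidHom) →
          lAT = AddMonoidHom.range (((ℓ : ℚ_[ℓ]) • A).toAddMonoidHom.comp
            ι.toAddMonoidHom) →
          S3 = AddMonoidHom.range ((ℓ • ι).toAddMonoidHom) ⊔ lAT →
          ∃ dL : (↥(TT ⊓ AT) ⧸ (lAT.addSubgroupOf (TT ⊓ AT))) →+
              (↥TT ⧸ (S3.addSubgroupOf TT)),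
            ∀ (x : ℚ_[ℓ] ⊗[ℤ_[ℓ]] T) (hx : x ∈ TT ⊓ AT)
              (y : ℚ_[ℓ] ⊗[ℤ_[ℓ]] T) (hy : y ∈ TT),
              A y = x →
              dL (QuotientAddGroup.mk ⟨x, hx⟩) = QuotientAddGroup.mk ⟨y, hy⟩) := by
  classical
  have hℓ0 : ((ℓ : ℚ_[ℓ]) ≠ 0) := Nat.cast_ne_zero.mpr hℓ.out.ne_zero
  set f : T →ₗ[ℤ_[ℓ]] T := (LinearMap.id : T →ₗ[ℤ_[ℓ]] T) - Φ.toLinearMap with hfdef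
  set F : (ℚ_[ℓ] ⊗[ℤ_[ℓ]] T) →ₗ[ℚ_[ℓ]] (ℚ_[ℓ] ⊗[ℤ_[ℓ]] T) := LinearMap.baseChange ℚ_[ℓ] f
    with hFdef
  -- surjectivity of F
  have hsurjF : Function.Surjective F := by
    intro v
    have hv : v ∈ LinearMap.range F := by
      induction v using TensorProduct.induction_on with
      | zero => exact zero_mem _
      | tmul c t =>
        have hord : IsOfFinAddOrder (Submodule.Quotient.mk t :
            T ⧸ LinearMap.range f) := isOfFinAddOrder_of_finite _
        obtain ⟨n, hn, hnt⟩ := isOfFinAddOrder_iff_nsmul_eq_zero.mp hord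
        have hn0 : ((n : ℚ_[ℓ]) ≠ 0) := Nat.cast_ne_zero.mpr hn.ne'
        have hmem : n • t ∈ LinearMap.range f := by
          rw [← Submodule.Quotient.mk_eq_zero]
          have : (Submodule.Quotient.mk (n • t) :
              T ⧸ LinearMap.range f) = n • Submodule.Quotient.mk t :=
            map_nsmul (LinearMap.range f).mkQ n t
          rw [this, hnt]
        obtain ⟨s, hs⟩ := hmem
        refine ⟨(c * (n : ℚ_[ℓ])⁻¹) • ((1 : ℚ_[ℓ]) ⊗ₜ[ℤ_[ℓ]] s), ?_⟩
        have h1 : F ((1 : ℚ_[ℓ]) ⊗ₜ[ℤ_[ℓ]] s) = (1 : ℚ_[ℓ]) ⊗ₜ[ℤ_[ℓ]] (f s) :=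
          LinearMap.baseChange_tmul f 1 s
        have h2 : (1 : ℚ_[ℓ]) ⊗ₜ[ℤ_[ℓ]] (n • t)
            = (n : ℚ_[ℓ]) • ((1 : ℚ_[ℓ]) ⊗ₜ[ℤ_[ℓ]] t) := by
          rw [Nat.cast_smul_eq_nsmul]
          exact map_nsmul ((TensorProduct.mk ℤ_[ℓ] ℚ_[ℓ] T) 1) n t
        rw [map_smul, h1, hs, h2, smul_smul, mul_assoc, inv_mul_cancel₀ hn0, mul_one,
          TensorProduct.smul_tmul', smul_eq_mul, mul_one]
      | add x y hx hy => exact add_mem hx hy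
    exact hv
  have hinjF : Function.Injective F := LinearMap.injective_iff_surjective.mpr hsurjF
  -- define A
  set A : (ℚ_[ℓ] ⊗[ℤ_[ℓ]] T) →ₗ[ℚ_[ℓ]] (ℚ_[ℓ] ⊗[ℤ_[ℓ]] T) := (-(ℓ : ℚ_[ℓ])⁻¹) • F
    with hAdef
  have hc0 : (-(ℓ : ℚ_[ℓ])⁻¹) ≠ 0 := neg_ne_zero.mpr (inv_ne_zero hℓ0)
  have hAbij : Function.Bijective A := by
    constructor
    · intro x y hxy
      apply hinjF
      exact smul_right_injective _ hc0 hxy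
    · intro y
      obtain ⟨x, hx⟩ := hsurjF ((-(ℓ : ℚ_[ℓ])⁻¹)⁻¹ • y)
      refine ⟨x, ?_⟩
      show (-(ℓ : ℚ_[ℓ])⁻¹) • F x = y
      rw [hx, smul_inv_smul₀ hc0]
  have hΦeq : LinearMap.baseChange ℚ_[ℓ] Φ.toLinearMap = LinearMap.id + (ℓ : ℚ_[ℓ]) • A := by
    have : F = LinearMap.id - LinearMap.baseChange ℚ_[ℓ] Φ.toLinearMap := by
      rw [hFdef, hfdef, LinearMap.baseChange_sub, LinearMap.baseChange_id]
    rw [hAdef, smul_smul, mul_neg, mul_inv_cancel₀ hℓ0, this]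
    ext v
    simp
  refine ⟨A, ⟨hAbij, hΦeq, ?_⟩, ?_⟩
  · -- the dL part
    intro ι hι TT AT lAT S3 hTT hAT hlAT hS3
    subst hTT hAT hlAT hS3
    set e : (ℚ_[ℓ] ⊗[ℤ_[ℓ]] T) ≃ₗ[ℚ_[ℓ]] (ℚ_[ℓ] ⊗[ℤ_[ℓ]] T) :=
      LinearEquiv.ofBijective A hAbij with hedef
    have heA : ∀ v, e v = A v := fun _ => rfl
    have hmem : ∀ x : ℚ_[ℓ] ⊗[ℤ_[ℓ]] T,
        x ∈ AddMonoidHom.range (A.toAddMonoidHom.comp ι.toAddMonoidHom) →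
        e.symm x ∈ AddMonoidHom.range ι.toAddMonoidHom := by
      rintro x ⟨t, rfl⟩
      refine ⟨t, ?_⟩
      have : (A.toAddMonoidHom.comp ι.toAddMonoidHom) t = e (ι t) := rfl
      rw [this, e.symm_apply_apply]
      rfl
    set TT := AddMonoidHom.range ι.toAddMonoidHom
    set AT := AddMonoidHom.range (A.toAddMonoidHom.comp ι.toAddMonoidHom)
    set lAT := AddMonoidHom.range (((ℓ : ℚ_[ℓ]) • A).toAddMonoidHom.comp ι.toAddMonoidHom)
    set S3 := AddMonoidHom.range ((ℓ • ι).toAddMonoidHom) ⊔ lAT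
    set g0 : ↥(TT ⊓ AT) →+ ↥TT :=
      AddMonoidHom.codRestrict
        ((e.symm.toLinearMap.toAddMonoidHom).comp (TT ⊓ AT).subtype) TT
        (fun x => hmem x ((AddSubgroup.mem_inf.mp x.2).2)) with hg0def
    have hg0 : ∀ x : ↥(TT ⊓ AT), ((g0 x : ↥TT) : ℚ_[ℓ] ⊗[ℤ_[ℓ]] T) = e.symm (x : ℚ_[ℓ] ⊗[ℤ_[ℓ]] T) :=
      fun x => rfl
    have hker : lAT.addSubgroupOf (TT ⊓ AT) ≤
        ((QuotientAddGroup.mk' (S3.addSubgroupOf TT)).comp g0).ker := by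
      intro x hx
      have hx' : (x : ℚ_[ℓ] ⊗[ℤ_[ℓ]] T) ∈ lAT := AddSubgroup.mem_addSubgroupOf.mp hx
      obtain ⟨t, ht⟩ := hx'
      have ht' : (((ℓ : ℚ_[ℓ]) • A).toAddMonoidHom.comp ι.toAddMonoidHom) t
          = (ℓ : ℚ_[ℓ]) • A (ι t) := rfl
      have hsymm : e.symm (x : ℚ_[ℓ] ⊗[ℤ_[ℓ]] T) = (ℓ : ℚ_[ℓ]) • ι t := by
        rw [← ht, ht']
        have : (ℓ : ℚ_[ℓ]) • A (ι t) = e ((ℓ : ℚ_[ℓ]) • ι t) := by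
          rw [heA, map_smul]
        rw [this, e.symm_apply_apply]
      have hS3mem : ((g0 x : ↥TT) : ℚ_[ℓ] ⊗[ℤ_[ℓ]] T) ∈ S3 := by
        rw [hg0, hsymm]
        apply AddSubgroup.mem_sup_left
        refine ⟨t, ?_⟩
        show (ℓ • ι) t = (ℓ : ℚ_[ℓ]) • ι t
        rw [LinearMap.smul_apply, ← Nat.cast_smul_eq_nsmul ℚ_[ℓ]]
      show (QuotientAddGroup.mk' (S3.addSubgroupOf TT)) (g0 x) = 0
      rw [QuotientAddGroup.mk'_apply, QuotientAddGroup.eq_zero_iff]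
      exact AddSubgroup.mem_addSubgroupOf.mpr hS3mem
    refine ⟨QuotientAddGroup.lift _ ((QuotientAddGroup.mk' (S3.addSubgroupOf TT)).comp g0)
      hker, ?_⟩
    intro x hx y hy hxy
    have hxval : g0 ⟨x, hx⟩ = (⟨y, hy⟩ : ↥TT) := by
      apply Subtype.ext
      rw [hg0]
      show e.symm x = y
      rw [LinearEquiv.symm_apply_eq, heA, hxy]
    have : (QuotientAddGroup.lift _ ((QuotientAddGroup.mk' (S3.addSubgroupOf TT)).comp g0)
        hker) (QuotientAddGroup.mk ⟨x, hx⟩)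
        = (QuotientAddGroup.mk' (S3.addSubgroupOf TT)) (g0 ⟨x, hx⟩) :=
      QuotientAddGroup.lift_mk' _ _ _
    rw [this, hxval, QuotientAddGroup.mk'_apply]
  · -- uniqueness
    intro A' ⟨_, heq', _⟩
    have h : (ℓ : ℚ_[ℓ]) • A' = (ℓ : ℚ_[ℓ]) • A := by
      have := heq'.symm.trans hΦeq
      exact add_left_cancel this
    exact smul_right_injective _ hℓ0 h
end

section
/- Let ζ be a primitive cube root of unity, F = ℚ(ζ), E the elliptic curve y² = x³ − 3 over F, and E' the elliptic curve ỹ² = 1 − 3w³ over F. For a finite extension N of F, let E_N = N ⊗_F E and E'_N = N ⊗_F E'. Then: (i) the 3-torsion subgroup of Pic⁰(E_N) has order 9 if and only if F(12^{1/3}) ⊆ N; (ii) the 3-torsion subgroup of Pic⁰(E'_N) has order 9 if and only if F((4/3)^{1/3}) ⊆ N. -/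
/-!
# Statement 16 (Lemma `deffields` (i), (ii)): fields of definition of the 3-torsion

`F = ℚ(ζ)` with `ζ` a primitive cube root of unity (`F` is the third cyclotomic field),
and `N` is a finite extension of `F`.  `E : y² = x³ - 3` is used in its given Weierstrass
form.  The elliptic curve `E' : ỹ² = 1 - 3w³` is used through its Weierstrass model
`y² = x³ + 9`, obtained by the change of variables `(w, ỹ) = (-x/3, y/3)` over `F`.
By Lemma `cor:ecor`, the 3-torsion of `Pic⁰(E_N)` (resp. `Pic⁰(E'_N)`) is identified
with the group of `N`-rational points `P` with `3P = 0`.  Since `F ⊆ N` contains `ζ`,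
`F(12^{1/3}) ⊆ N` iff `N` contains a cube root of `12`, and
`F((4/3)^{1/3}) ⊆ N` iff `N` contains a cube root of `4/3`.
-/


open WeierstrassCurve.Affine WeierstrassCurve.Affine.Point

open Classical

variable {K : Type} [Field K] [CharZero K]

def Wb (b : K) : WeierstrassCurve.Affine K := { a₁ := 0, a₂ := 0, a₃ := 0, a₄ := 0, a₆ := b }

omit [CharZero K] in
lemma eq_Wb {b x y : K} (hE : (Wb b).Equation x y) : y ^ 2 = x ^ 3 + b := by
  rw [equation_iff] at hE; simpa [Wb] using hE

omit [CharZero K] in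
lemma eq_Wb' {b x y : K} (hE : y ^ 2 = x ^ 3 + b) : (Wb b).Equation x y := by
  rw [equation_iff]; simpa [Wb] using hE

lemma nonsingular_Wb {b : K} (hb : b ≠ 0) {x y : K} (h : (Wb b).Equation x y) :
    (Wb b).Nonsingular x y := by
  rw [nonsingular_iff]
  refine ⟨h, ?_⟩
  have h' := eq_Wb h
  by_contra hc
  push_neg at hc
  obtain ⟨h1, h2⟩ := hc
  simp only [Wb, zero_mul, mul_zero, add_zero, zero_add, sub_zero] at h1 h2
  have hx : x = 0 := by
    have h3 : (3 : K) * x ^ 2 = 0 := h1.symm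
    rcases mul_eq_zero.mp h3 with h | h
    · exact absurd h (by norm_num)
    · exact pow_eq_zero_iff (n := 2) (by norm_num) |>.mp h
  have hy : y = 0 := by
    have : y + y = 0 := by linear_combination h2
    exact add_self_eq_zero.mp this
  apply hb
  rw [hx, hy] at h'
  linear_combination -h'

omit [CharZero K] in
lemma negY_Wb {b : K} (x y : K) : (Wb b).negY x y = -y := by simp [negY, Wb]

lemma three_torsion_iff {b : K} (hb : b ≠ 0) {x y : K} (h : (Wb b).Nonsingular x y) :
    3 • (Point.some _ _ h : (Wb b).Point) = 0 ↔ x * (x ^ 3 + 4 * b) = 0 := by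
  have hE : y ^ 2 = x ^ 3 + b := eq_Wb h.1
  have h3 : (3 • (Point.some _ _ h : (Wb b).Point) = 0) ↔
      Point.some _ _ h + Point.some _ _ h = -Point.some _ _ h := by
    rw [eq_neg_iff_add_eq_zero, show (3 : ℕ) • (Point.some _ _ h : (Wb b).Point) =
      Point.some _ _ h + Point.some _ _ h + Point.some _ _ h by rw [succ_nsmul, two_nsmul]]
  rw [h3]
  by_cases hy : y = 0
  · have hne : y = (Wb b).negY x y := by rw [negY_Wb, hy, _root_.neg_zero]
    rw [add_self_of_Y_eq hne]
    have hx3 : x ^ 3 = -b := by subst hy; linear_combination -hE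
    have hx0 : x ≠ 0 := by
      intro h0; rw [h0] at hx3; apply hb; linear_combination hx3
    constructor
    · intro hc; exact absurd hc.symm (by rw [neg_some]; exact some_ne_zero _)
    · intro hc
      exfalso
      rcases mul_eq_zero.mp hc with h' | h'
      · exact hx0 h'
      · rw [hx3] at h'
        exact hb (by linear_combination (1/3 : K) * h')
  · have hne : y ≠ (Wb b).negY x y := by
      rw [negY_Wb]; intro hc; exact hy (add_self_eq_zero.mp (by linear_combination hc))
    rw [add_self_of_Y_ne hne, neg_some, Point.some.injEq]
    have hy2 : (2 : K) * y ≠ 0 := by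
      intro hc; rcases mul_eq_zero.mp hc with h' | h'
      · exact absurd h' (by norm_num)
      · exact hy h'
    set L := (Wb b).slope x x y y with hLdef
    have hLval : L = 3 * x ^ 2 / (2 * y) := by
      rw [hLdef, slope_of_Y_ne rfl hne]
      simp only [Wb, negY]
      ring_nf
    have haddX : (Wb b).addX x x L = L ^ 2 - 2 * x := by
      simp only [addX, Wb]; ring
    constructor
    · rintro ⟨hx, -⟩
      rw [haddX, hLval] at hx
      field_simp at hx
      linear_combination (-1/3 : K) * hx - 4 * x * hE
    · intro hc
      have hx : (Wb b).addX x x L = x := by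
        rw [haddX, hLval]
        field_simp
        linear_combination (-3 : K) * hc - 12 * x * hE
      refine ⟨hx, ?_⟩
      rw [addY, negAddY, hx]
      simp only [negY_Wb]
      ring

/-- Projection of a point to its affine coordinates, with `0 ↦ (0,0)`. -/
def pf {b : K} : (Wb b).Point → K × K
  | .zero => (0, 0)
  | @Point.some _ _ _ x y _ => (x, y)

omit [CharZero K] in
lemma pf_inj {b : K} (hb : b ≠ 0) : Function.Injective (pf (K := K) (b := b)) := by
  rintro (_ | @⟨x₁, y₁, h₁⟩) (_ | @⟨x₂, y₂, h₂⟩) h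
  · rfl
  · exfalso
    simp only [pf] at h
    injection h with h1 h2
    apply hb
    have := h₂.1
    rw [← h1, ← h2] at this
    rw [equation_iff] at this
    simpa [Wb] using this.symm
  · exfalso
    simp only [pf] at h
    injection h with h1 h2
    apply hb
    have := h₁.1
    rw [h1, h2] at this
    rw [equation_iff] at this
    simpa [Wb] using this.symm
  · simp only [pf] at h
    injection h with h1 h2
    subst h1; subst h2
    rfl

lemma range_pf {b : K} (hb : b ≠ 0) :
    Set.range (fun P : {P : (Wb b).Point // 3 • P = 0} => pf P.1) =
      {p : K × K | p = (0, 0) ∨ ((Wb b).Equation p.1 p.2 ∧ p.1 * (p.1 ^ 3 + 4 * b) = 0)} := by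
  ext ⟨px, py⟩
  constructor
  · rintro ⟨⟨P, hP⟩, h⟩
    dsimp only at h
    cases P with
    | zero => exact Or.inl h.symm
    | some _ _ hn =>
      simp only [pf] at h
      injection h with h1 h2
      subst h1; subst h2
      exact Or.inr ⟨hn.1, (three_torsion_iff hb hn).mp hP⟩
  · rintro (h | ⟨hE, hT⟩)
    · exact ⟨⟨0, smul_zero 3⟩, h.symm⟩
    · exact ⟨⟨Point.some _ _ (nonsingular_Wb hb hE), (three_torsion_iff hb _).mpr hT⟩, rfl⟩

lemma card_eq {b : K} (hb : b ≠ 0) :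
    Nat.card {P : (Wb b).Point // 3 • P = 0} =
      {p : K × K | p = (0, 0) ∨ ((Wb b).Equation p.1 p.2 ∧ p.1 * (p.1 ^ 3 + 4 * b) = 0)}.ncard := by
  rw [← range_pf hb, ← Nat.card_coe_set_eq]
  exact (Nat.card_range_of_injective ((pf_inj hb).comp Subtype.val_injective)).symm

variable {K : Type} [Field K] [CharZero K]

section
variable {ζ : K} (hζ : IsPrimitiveRoot ζ 3)
include hζ

lemma zeta_cube : ζ ^ 3 = 1 := hζ.pow_eq_one

lemma zeta_ne_one : ζ ≠ 1 := hζ.ne_one (by norm_num)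

lemma zeta_sum : ζ ^ 2 + ζ + 1 = 0 := by
  have h : (ζ - 1) * (ζ ^ 2 + ζ + 1) = 0 := by linear_combination zeta_cube hζ
  rcases mul_eq_zero.mp h with h' | h'
  · exact absurd (by linear_combination h') (zeta_ne_one hζ)
  · exact h'

lemma zeta_ne_zero : ζ ≠ 0 := by
  intro h
  have := zeta_cube hζ
  rw [h] at this
  simpa using this

lemma zeta_sq_ne_one : ζ ^ 2 ≠ 1 := by
  intro h
  have h4 : (ζ - 1) * (ζ + 1) = 0 := by linear_combination h
  rcases mul_eq_zero.mp h4 with h' | h'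
  · exact zeta_ne_one hζ (by linear_combination h')
  · have h3 := zeta_cube hζ
    have hz : ζ = -1 := by linear_combination h'
    rw [hz] at h3
    norm_num at h3

lemma zeta_ne_zeta_sq : ζ ≠ ζ ^ 2 := by
  intro h
  have h4 : ζ * (ζ - 1) = 0 := by linear_combination -h
  rcases mul_eq_zero.mp h4 with h' | h'
  · exact zeta_ne_zero hζ h'
  · exact zeta_ne_one hζ (by linear_combination h')
end

section Count
variable {ζ : K} (hζ : IsPrimitiveRoot ζ 3)
include hζ

lemma card_nine {b s₀ c : K} (hb : b ≠ 0) (hs : s₀ ^ 2 = b) (hc : c ^ 3 = -4 * b) :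
    Nat.card {P : (Wb b).Point // 3 • P = 0} = 9 := by
  have hz3 := zeta_cube hζ
  have hzs := zeta_sum hζ
  set t : K := (2 * ζ + 1) * s₀ with ht
  have hs0 : s₀ ≠ 0 := by intro h; apply hb; rw [← hs, h]; ring
  have h2z : (2 * ζ + 1) ≠ 0 := by
    intro h
    have : ((2 : K) * ζ + 1) ^ 2 = -3 := by linear_combination 4 * hzs
    rw [h] at this; norm_num at this
  have ht0 : t ≠ 0 := mul_ne_zero h2z hs0
  have hc0 : c ≠ 0 := by
    intro h; apply hb
    have : (0 : K) ^ 3 = -4 * b := h ▸ hc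
    linear_combination (1/4 : K) * this
  have A1 : (0 : K) ≠ s₀ := fun h => hs0 h.symm
  have A2 : (0 : K) ≠ -s₀ := fun h => hs0 (by linear_combination h)
  have A3 : (0 : K) ≠ c := fun h => hc0 h.symm
  have A4 : (0 : K) ≠ ζ * c := fun h => (mul_ne_zero (zeta_ne_zero hζ) hc0) h.symm
  have A5 : (0 : K) ≠ ζ ^ 2 * c :=
    fun h => (mul_ne_zero (pow_ne_zero 2 (zeta_ne_zero hζ)) hc0) h.symm
  have A6 : s₀ ≠ -s₀ := by
    intro h; exact hs0 (add_self_eq_zero.mp (by linear_combination h))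
  have A7 : t ≠ -t := by
    intro h; exact ht0 (add_self_eq_zero.mp (by linear_combination h))
  have A8 : c ≠ ζ * c := by
    intro h
    have : (ζ - 1) * c = 0 := by linear_combination -h
    rcases mul_eq_zero.mp this with h' | h'
    · exact zeta_ne_one hζ (by linear_combination h')
    · exact hc0 h'
  have A9 : c ≠ ζ ^ 2 * c := by
    intro h
    have : (ζ ^ 2 - 1) * c = 0 := by linear_combination -h
    rcases mul_eq_zero.mp this with h' | h'
    · exact zeta_sq_ne_one hζ (by linear_combination h')
    · exact hc0 h'
  have A10 : ζ * c ≠ ζ ^ 2 * c := by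
    intro h
    have : ζ * ((ζ - 1) * c) = 0 := by linear_combination -h
    rcases mul_eq_zero.mp this with h' | h'
    · exact zeta_ne_zero hζ h'
    · rcases mul_eq_zero.mp h' with h'' | h''
      · exact zeta_ne_one hζ (by linear_combination h'')
      · exact hc0 h''
  rw [card_eq hb]
  have hset : {p : K × K | p = (0, 0) ∨ ((Wb b).Equation p.1 p.2 ∧ p.1 * (p.1 ^ 3 + 4 * b) = 0)} =
      ({(0, 0), (0, s₀), (0, -s₀), (c, t), (c, -t), (ζ * c, t), (ζ * c, -t),
        (ζ ^ 2 * c, t), (ζ ^ 2 * c, -t)} : Set (K × K)) := by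
    ext ⟨x, y⟩
    simp only [Set.mem_setOf_eq, Set.mem_insert_iff, Set.mem_singleton_iff, Prod.mk.injEq]
    constructor
    · rintro (h | ⟨hE, hT⟩)
      · exact Or.inl h
      · have hE' : y ^ 2 = x ^ 3 + b := eq_Wb hE
        rcases mul_eq_zero.mp hT with hx | hx
        · -- x = 0, y² = b = s₀²
          have hy : (y - s₀) * (y + s₀) = 0 := by
            subst hx; linear_combination hE' - hs
          rcases mul_eq_zero.mp hy with h' | h'
          · exact Or.inr (Or.inl ⟨hx, by linear_combination h'⟩)
          · exact Or.inr (Or.inr (Or.inl ⟨hx, by linear_combination h'⟩))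
        · -- x³ = -4b
          have hfac : (x - c) * (x - ζ * c) * (x - ζ ^ 2 * c) = 0 := by
            linear_combination (-(x ^ 2 * c) + x * c ^ 2 * ζ ^ 2) * hzs +
              (x * c ^ 2 * ζ - c ^ 3 - 2 * x * c ^ 2 * ζ) * hz3 - hc + hx
          have hy2 : (y - t) * (y + t) = 0 → y = t ∨ y = -t := by
            intro h
            rcases mul_eq_zero.mp h with h' | h'
            · exact Or.inl (by linear_combination h')
            · exact Or.inr (by linear_combination h')
          rcases mul_eq_zero.mp hfac with h' | h'
          rcases mul_eq_zero.mp h' with h'' | h''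
          · -- x = c
            have hxc : x = c := by linear_combination h''
            have : (y - t) * (y + t) = 0 := by
              subst hxc
              linear_combination hE' + hc - (4 * ζ ^ 2 + 4 * ζ + 1) * hs - 4 * b * hzs
            rcases hy2 this with h3 | h3
            · exact Or.inr <| Or.inr <| Or.inr <| Or.inl ⟨hxc, h3⟩
            · exact Or.inr <| Or.inr <| Or.inr <| Or.inr <| Or.inl ⟨hxc, h3⟩
          · -- x = ζ c
            have hxc : x = ζ * c := by linear_combination h''
            have : (y - t) * (y + t) = 0 := by
              subst hxc
              linear_combination hE' + ζ ^ 3 * hc - 4 * b * hz3 -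
                (4 * ζ ^ 2 + 4 * ζ + 1) * hs - 4 * b * hzs
            rcases hy2 this with h3 | h3
            · exact Or.inr <| Or.inr <| Or.inr <| Or.inr <| Or.inr <| Or.inl ⟨hxc, h3⟩
            · exact Or.inr <| Or.inr <| Or.inr <| Or.inr <| Or.inr <| Or.inr <| Or.inl ⟨hxc, h3⟩
          · -- x = ζ² c
            have hxc : x = ζ ^ 2 * c := by linear_combination h'
            have : (y - t) * (y + t) = 0 := by
              subst hxc
              linear_combination hE' + ζ ^ 6 * hc - 4 * b * (ζ ^ 3 + 1) * hz3 -
                (4 * ζ ^ 2 + 4 * ζ + 1) * hs - 4 * b * hzs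
            rcases hy2 this with h3 | h3
            · exact Or.inr <| Or.inr <| Or.inr <| Or.inr <| Or.inr <| Or.inr <| Or.inr <|
                Or.inl ⟨hxc, h3⟩
            · exact Or.inr <| Or.inr <| Or.inr <| Or.inr <| Or.inr <| Or.inr <| Or.inr <|
                Or.inr ⟨hxc, h3⟩
    · rintro (h | h | h | h | h | h | h | h | h) <;> obtain ⟨h1, h2⟩ := h
      · exact Or.inl ⟨h1, h2⟩
      · refine Or.inr ⟨eq_Wb' ?_, ?_⟩
        · rw [h1, h2]; linear_combination hs
        · rw [h1]; ring
      · refine Or.inr ⟨eq_Wb' ?_, ?_⟩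
        · rw [h1, h2]; linear_combination hs
        · rw [h1]; ring
      · refine Or.inr ⟨eq_Wb' ?_, ?_⟩
        · rw [h1, h2]; linear_combination (4 * ζ ^ 2 + 4 * ζ + 1) * hs + 4 * b * hzs - hc
        · rw [h1]; linear_combination c * hc
      · refine Or.inr ⟨eq_Wb' ?_, ?_⟩
        · rw [h1, h2]; linear_combination (4 * ζ ^ 2 + 4 * ζ + 1) * hs + 4 * b * hzs - hc
        · rw [h1]; linear_combination c * hc
      · refine Or.inr ⟨eq_Wb' ?_, ?_⟩
        · rw [h1, h2]; linear_combination (4 * ζ ^ 2 + 4 * ζ + 1) * hs + 4 * b * hzs - ζ ^ 3 * hc + 4 * b * hz3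
        · rw [h1]; linear_combination ζ ^ 4 * c * hc - 4 * b * ζ * c * hz3
      · refine Or.inr ⟨eq_Wb' ?_, ?_⟩
        · rw [h1, h2]; linear_combination (4 * ζ ^ 2 + 4 * ζ + 1) * hs + 4 * b * hzs - ζ ^ 3 * hc + 4 * b * hz3
        · rw [h1]; linear_combination ζ ^ 4 * c * hc - 4 * b * ζ * c * hz3
      · refine Or.inr ⟨eq_Wb' ?_, ?_⟩
        · rw [h1, h2]
          linear_combination (4 * ζ ^ 2 + 4 * ζ + 1) * hs + 4 * b * hzs - ζ ^ 6 * hc +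
            4 * b * (ζ ^ 3 + 1) * hz3
        · rw [h1]; linear_combination ζ ^ 8 * c * hc - 4 * b * ζ ^ 2 * c * (ζ ^ 3 + 1) * hz3
      · refine Or.inr ⟨eq_Wb' ?_, ?_⟩
        · rw [h1, h2]
          linear_combination (4 * ζ ^ 2 + 4 * ζ + 1) * hs + 4 * b * hzs - ζ ^ 6 * hc +
            4 * b * (ζ ^ 3 + 1) * hz3
        · rw [h1]; linear_combination ζ ^ 8 * c * hc - 4 * b * ζ ^ 2 * c * (ζ ^ 3 + 1) * hz3
  rw [hset]
  rw [Set.ncard_insert_of_notMem (by simp [Prod.ext_iff, A1, A2, A3, A4, A5]),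
    Set.ncard_insert_of_notMem (by simp [Prod.ext_iff, A3, A4, A5, A6]),
    Set.ncard_insert_of_notMem (by simp [Prod.ext_iff, A3, A4, A5]),
    Set.ncard_insert_of_notMem (by simp [Prod.ext_iff, A7, A8, A9]),
    Set.ncard_insert_of_notMem (by simp [Prod.ext_iff, A8, A9]),
    Set.ncard_insert_of_notMem (by simp [Prod.ext_iff, A7, A10]),
    Set.ncard_insert_of_notMem (by simp [Prod.ext_iff, A10]),
    Set.ncard_insert_of_notMem (by simp [Prod.ext_iff, A7]),
    Set.ncard_singleton]
end Count

lemma card_three {b s₀ : K} (hb : b ≠ 0) (hs : s₀ ^ 2 = b) (hnc : ∀ z : K, z ^ 3 ≠ -4 * b) :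
    Nat.card {P : (Wb b).Point // 3 • P = 0} = 3 := by
  have hs0 : s₀ ≠ 0 := by intro h; apply hb; rw [← hs, h]; ring
  have A1 : (0 : K) ≠ s₀ := fun h => hs0 h.symm
  have A6 : s₀ ≠ -s₀ := by
    intro h; exact hs0 (add_self_eq_zero.mp (by linear_combination h))
  rw [card_eq hb]
  have hset : {p : K × K | p = (0, 0) ∨ ((Wb b).Equation p.1 p.2 ∧ p.1 * (p.1 ^ 3 + 4 * b) = 0)} =
      ({(0, 0), (0, s₀), (0, -s₀)} : Set (K × K)) := by
    ext ⟨x, y⟩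
    simp only [Set.mem_setOf_eq, Set.mem_insert_iff, Set.mem_singleton_iff, Prod.mk.injEq]
    constructor
    · rintro (h | ⟨hE, hT⟩)
      · exact Or.inl h
      · have hE' : y ^ 2 = x ^ 3 + b := eq_Wb hE
        rcases mul_eq_zero.mp hT with hx | hx
        · have hy : (y - s₀) * (y + s₀) = 0 := by
            subst hx; linear_combination hE' - hs
          rcases mul_eq_zero.mp hy with h' | h'
          · exact Or.inr (Or.inl ⟨hx, by linear_combination h'⟩)
          · exact Or.inr (Or.inr ⟨hx, by linear_combination h'⟩)
        · exact absurd (by linear_combination hx : x ^ 3 = -4 * b) (hnc x)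
    · rintro (h | h | h) <;> obtain ⟨h1, h2⟩ := h
      · exact Or.inl ⟨h1, h2⟩
      · refine Or.inr ⟨eq_Wb' ?_, ?_⟩
        · rw [h1, h2]; linear_combination hs
        · rw [h1]; ring
      · refine Or.inr ⟨eq_Wb' ?_, ?_⟩
        · rw [h1, h2]; linear_combination hs
        · rw [h1]; ring
  rw [hset, Set.ncard_insert_of_notMem (by simp [Prod.ext_iff, hs0, A1, A6]),
    Set.ncard_insert_of_notMem (by simp [Prod.ext_iff, hs0, A1, A6]), Set.ncard_singleton]


theorem stmt_16
    (F : Type) [Field F] [Algebra ℚ F] [IsCyclotomicExtension {3} ℚ F]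
    (ζ : F) (hζ : IsPrimitiveRoot ζ 3)
    (N : Type) [Field N] [Algebra F N] [FiniteDimensional F N] :
    -- (i) Pic⁰(E_N)[3] has order 9 iff F(12^{1/3}) ⊆ N
    (Nat.card {P : WeierstrassCurve.Affine.Point
        ({ a₁ := 0, a₂ := 0, a₃ := 0, a₄ := 0, a₆ := -3 } : WeierstrassCurve.Affine N) //
          3 • P = 0} = 9
      ↔ ∃ u : N, u ^ 3 = 12)
      ∧
    -- (ii) Pic⁰(E'_N)[3] has order 9 iff F((4/3)^{1/3}) ⊆ N
    (Nat.card {P : WeierstrassCurve.Affine.Point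
        ({ a₁ := 0, a₂ := 0, a₃ := 0, a₄ := 0, a₆ := 9 } : WeierstrassCurve.Affine N) //
          3 • P = 0} = 9
      ↔ ∃ u : N, u ^ 3 = 4 / 3) := by
  have hF : CharZero F := charZero_of_injective_algebraMap (algebraMap ℚ F).injective
  have hN : CharZero N := charZero_of_injective_algebraMap (algebraMap F N).injective
  set ζ' : N := algebraMap F N ζ with hζ'def
  have hζ' : IsPrimitiveRoot ζ' 3 := hζ.map_of_injective (algebraMap F N).injective
  have key : ∀ b s₀ : N, b ≠ 0 → s₀ ^ 2 = b →
      (Nat.card {P : (Wb b).Point // 3 • P = 0} = 9 ↔ ∃ c : N, c ^ 3 = -4 * b) := by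
    intro b s₀ hb hs
    constructor
    · intro h9
      by_contra hnc
      push_neg at hnc
      rw [card_three hb hs hnc] at h9
      norm_num at h9
    · rintro ⟨c, hc⟩
      exact card_nine hζ' hb hs hc
  have hs1 : (2 * ζ' + 1) ^ 2 = (-3 : N) := by linear_combination 4 * zeta_sum hζ'
  constructor
  · refine (key (-3) (2 * ζ' + 1) (by norm_num) hs1).trans ?_
    constructor <;> rintro ⟨u, hu⟩ <;> exact ⟨u, by linear_combination hu⟩
  · refine (key 9 3 (by norm_num) (by norm_num)).trans ?_
    constructor
    · rintro ⟨c, hc⟩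
      refine ⟨c / (-3), ?_⟩
      rw [div_pow, hc]
      norm_num
    · rintro ⟨u, hu⟩
      exact ⟨-3 * u, by linear_combination (-27 : N) * hu⟩
end
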